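/- Let G = G(d,e,k) be a group of squarefree order n = d·e, with z = gcd(e,k−1) and g = e/z. Let x = [σ^a τ, θ^c φ_s] ∈ Hol(G), with a ∈ Z/eZ, c ∈ Z/gZ, s ∈ U(e). Then x generates a regular cyclic subgroup of Hol(G) if and only if: (i) for each prime q dividing z, s ≡ 1 (mod q) and q does not divide a; and (ii) for each prime q dividing g, either s ≡ 1 (mod q) and c ≢ 0 (mod q), or s ≡ k⁻¹ (mod q) and (s−1)a + cz ≢ 0 (mod q). -/

import Mathlib

namespace RegAux

/-! ### Arithmetic sequences -/

def Sq (s m : ℕ) : ℕ := ∑ i ∈ Finset.range m, s ^ i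
def Wq (k m : ℕ) : ℕ := ∑ i ∈ Finset.range m, i * k ^ i
def Aq (k s a c z m : ℕ) : ℕ := ∑ i ∈ Finset.range m, k ^ i * (a * s ^ i + c * z * Sq s i)

lemma Sq_succ (s m : ℕ) : Sq s (m+1) = Sq s m + s ^ m := Finset.sum_range_succ _ _
lemma Wq_succ (k m : ℕ) : Wq k (m+1) = Wq k m + m * k ^ m := Finset.sum_range_succ _ _
lemma Aq_succ (k s a c z m : ℕ) :
    Aq k s a c z (m+1) = Aq k s a c z m + k ^ m * (a * s ^ m + c * z * Sq s m) :=
  Finset.sum_range_succ _ _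

section Ring
variable {R : Type} [CommRing R]

lemma G1 (s m : ℕ) : ((s:R) - 1) * (Sq s m : R) = (s:R) ^ m - 1 := by
  induction m with
  | zero => simp [Sq]
  | succ m ih =>
      rw [Sq_succ]; push_cast
      rw [mul_add, ih]; ring

lemma G2 (s m : ℕ) (h : (s:R) = 1) : (Sq s m : R) = m := by
  induction m with
  | zero => simp [Sq]
  | succ m ih => rw [Sq_succ]; push_cast; rw [ih, h]; ring

lemma G6 (k m : ℕ) : ((k:R) - 1) * (Wq k m : R)
    = (m:R) * (k:R) ^ m - (k:R) ^ m + 1 - (Sq k m : R) := by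
  induction m with
  | zero => simp [Wq, Sq]
  | succ m ih =>
      rw [Wq_succ, Sq_succ]; push_cast
      rw [mul_add, ih]; ring

lemma G4 (k s a c z m : ℕ) :
    ((s:R) - 1) * (Aq k s a c z m : R)
      = ((a:R) * ((s:R) - 1) + (c:R) * (z:R)) * (Sq (k*s) m : R)
        - (c:R) * (z:R) * (Sq k m : R) := by
  induction m with
  | zero => simp [Aq, Sq]
  | succ m ih =>
      rw [Aq_succ, Sq_succ, Sq_succ]; push_cast
      rw [mul_add, ih]
      have h1 : ((s:R) - 1) * (Sq s m : R) = (s:R) ^ m - 1 := G1 s m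
      have h2 : ((s:R)-1) * ((k:R)^m * ((a:R) * (s:R)^m + (c:R)*(z:R) * (Sq s m : R)))
          = (k:R)^m * ((a:R)*((s:R)-1)*(s:R)^m + (c:R)*(z:R)*(((s:R)-1) * (Sq s m : R))) := by
        ring
      rw [h2, h1]; ring

lemma G5 (k s a c z m : ℕ) (h : (s:R) = 1) :
    (Aq k s a c z m : R) = (a:R) * (Sq k m : R) + (c:R) * (z:R) * (Wq k m : R) := by
  induction m with
  | zero => simp [Aq, Sq, Wq]
  | succ m ih =>
      rw [Aq_succ, Sq_succ, Wq_succ]; push_cast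
      rw [ih, G2 s m h, h]; ring

lemma G7 (k s a c z m : ℕ) (hz : (z:R) = 0) (hk : (k:R) = 1) :
    (Aq k s a c z m : R) = (a:R) * (Sq s m : R) := by
  induction m with
  | zero => simp [Aq, Sq]
  | succ m ih =>
      rw [Aq_succ, Sq_succ]; push_cast
      rw [ih, hz, hk]; ring

end Ring

section Field
variable {F : Type} [Field F]

lemma kpow_one {k d m : ℕ} (hkd : (k:F)^d = 1) (hm : d ∣ m) : (k:F)^m = 1 := by
  obtain ⟨t, rfl⟩ := hm; rw [pow_mul, hkd, one_pow]

lemma Kzero {k d m : ℕ} (hkd : (k:F)^d = 1) (hk1 : (k:F) ≠ 1) (hm : d ∣ m) :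
    (Sq k m : F) = 0 := by
  have h := G1 (R := F) k m
  rw [kpow_one hkd hm, sub_self] at h
  exact (mul_eq_zero.mp h).resolve_left (sub_ne_zero.mpr hk1)

/-- local formula, case `q ∣ g`, `s ≡ 1`. -/
lemma Lg1 {k s d m : ℕ} (a c z : ℕ) (hkd : (k:F)^d = 1) (hk1 : (k:F) ≠ 1)
    (hm : d ∣ m) (hs : (s:F) = 1) :
    ((k:F) - 1) * (Aq k s a c z m : F) = (c:F) * (z:F) * m := by
  rw [G5 k s a c z m hs, Kzero hkd hk1 hm]
  have h6 := G6 (R := F) k m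
  rw [kpow_one hkd hm, Kzero hkd hk1 hm] at h6
  have h : ((k:F)-1) * ((a:F) * 0 + (c:F)*(z:F)*(Wq k m : F))
      = (c:F)*(z:F)*(((k:F)-1) * (Wq k m : F)) := by ring
  rw [h, h6]; ring

/-- local formula, case `q ∣ g`, `s*k ≡ 1`. -/
lemma Lg2 {k s d m : ℕ} (a c z : ℕ) (hkd : (k:F)^d = 1) (hk1 : (k:F) ≠ 1)
    (hm : d ∣ m) (hks : (s:F) * (k:F) = 1) :
    ((s:F) - 1) * (Aq k s a c z m : F)
      = (((s:F)-1) * (a:F) + (c:F) * (z:F)) * m := by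
  have h4 := G4 (R := F) k s a c z m
  have hks' : ((k*s : ℕ) : F) = 1 := by push_cast; rw [mul_comm]; exact hks
  rw [G2 (k*s) m hks', Kzero hkd hk1 hm] at h4
  rw [h4]; ring

/-- local formula, case `q ∣ g`, `s*k ≢ 1`. -/
lemma Lg3 {k s d m : ℕ} (a c z : ℕ) (hkd : (k:F)^d = 1) (hk1 : (k:F) ≠ 1)
    (hm : d ∣ m) :
    ((s:F) - 1) * ((k:F)*(s:F) - 1) * (Aq k s a c z m : F)
      = (((s:F)-1) * (a:F) + (c:F) * (z:F)) * ((s:F)^m - 1) := by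
  have h4 := G4 (R := F) k s a c z m
  have hE := G1 (R := F) (k*s) m
  have hcast : ((k*s : ℕ) : F) = (k:F)*(s:F) := by push_cast; ring
  rw [hcast] at hE
  rw [mul_pow, kpow_one hkd hm, one_mul] at hE
  rw [Kzero hkd hk1 hm] at h4
  calc ((s:F) - 1) * ((k:F)*(s:F) - 1) * (Aq k s a c z m : F)
      = ((k:F)*(s:F) - 1) * (((s:F) - 1) * (Aq k s a c z m : F)) := by ring
    _ = ((k:F)*(s:F) - 1) * (((a:F) * ((s:F) - 1) + (c:F) * (z:F)) * (Sq (k*s) m : F)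
          - (c:F)*(z:F)*0) := by rw [h4]
    _ = ((a:F) * ((s:F) - 1) + (c:F) * (z:F)) * (((k:F)*(s:F) - 1) * (Sq (k*s) m : F)) := by
          ring
    _ = _ := by rw [hE]; ring

end Field

/-! ### Squarefree glue -/

lemma sq_dvd_nat {e : ℕ} (hsf : Squarefree e) (N : ℕ)
    (h : ∀ q : ℕ, q.Prime → q ∣ e → q ∣ N) : e ∣ N := by
  rw [← Nat.prod_primeFactors_of_squarefree hsf]
  exact Finset.prod_primes_dvd N
    (fun p hp => (Nat.prime_of_mem_primeFactors hp).prime)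
    (fun p hp => h p (Nat.prime_of_mem_primeFactors hp) (Nat.dvd_of_mem_primeFactors hp))

lemma sq_dvd_int {e : ℕ} (hsf : Squarefree e) (N : ℤ)
    (h : ∀ q : ℕ, q.Prime → q ∣ e → (q:ℤ) ∣ N) : (e:ℤ) ∣ N := by
  rw [← Int.dvd_natAbs, Int.natCast_dvd_natCast]
  apply sq_dvd_nat hsf
  intro q hq hqe
  rw [← Int.natCast_dvd_natCast, Int.dvd_natAbs]
  exact h q hq hqe

/-! ### Group-theoretic normal form -/

variable {G : Type} [Group G]

lemma L_comm {σ τ : G} {k : ℕ} (hrel : τ * σ * τ⁻¹ = σ ^ k) :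
    ∀ j i : ℕ, τ^j * σ^i = σ^(i * k^j) * τ^j := by
  have h1 : τ * σ = σ ^ k * τ := by
    have := hrel; rw [mul_inv_eq_iff_eq_mul] at this; exact this
  have h2 : ∀ i : ℕ, τ * σ^i = σ^(i*k) * τ := by
    intro i; induction i with
    | zero => simp
    | succ i ih =>
        rw [pow_succ, ← mul_assoc, ih, mul_assoc, h1, ← mul_assoc, ← pow_add]
        have : i * k + k = (i+1) * k := by ring
        rw [this]
  intro j; induction j with
  | zero => simp
  | succ j ih =>
      intro i
      rw [pow_succ, mul_assoc, h2 i, ← mul_assoc, ih, ← mul_assoc]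
      have hexp : i * k * k ^ j = i * k ^ (j+1) := by ring
      rw [hexp]

lemma L_rep {σ τ : G} {k d e : ℕ} (hd : 0 < d) (he : 0 < e)
    (hσ : orderOf σ = e) (hτ : orderOf τ = d)
    (hrel : τ * σ * τ⁻¹ = σ ^ k) (hgen : Subgroup.closure {σ, τ} = ⊤) :
    ∀ w : G, ∃ i j : ℕ, w = σ^i * τ^j := by
  have hσe : σ ^ e = 1 := by rw [← hσ]; exact pow_orderOf_eq_one σ
  have hτd : τ ^ d = 1 := by rw [← hτ]; exact pow_orderOf_eq_one τ
  have hσinv : σ⁻¹ = σ ^ (e-1) := by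
    rw [eq_comm, eq_inv_iff_mul_eq_one, ← pow_succ, Nat.sub_add_cancel he, hσe]
  have hτinv : τ⁻¹ = τ ^ (d-1) := by
    rw [eq_comm, eq_inv_iff_mul_eq_one, ← pow_succ, Nat.sub_add_cancel hd, hτd]
  let S : Subgroup G :=
    { carrier := {w | ∃ i j : ℕ, w = σ^i * τ^j}
      one_mem' := ⟨0, 0, by simp⟩
      mul_mem' := by
        rintro w₁ w₂ ⟨i₁, j₁, rfl⟩ ⟨i₂, j₂, rfl⟩
        refine ⟨i₁ + i₂ * k ^ j₁, j₁ + j₂, ?_⟩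
        rw [pow_add, pow_add, mul_assoc, ← mul_assoc (τ^j₁), L_comm hrel j₁ i₂]
        group
      inv_mem' := by
        rintro w ⟨i, j, rfl⟩
        refine ⟨(i*(e-1)) * k ^ (j*(d-1)), j*(d-1), ?_⟩
        rw [← L_comm hrel, mul_inv_rev, ← inv_pow, ← inv_pow, hσinv, hτinv,
          ← pow_mul, ← pow_mul, Nat.mul_comm (d-1) j, Nat.mul_comm (e-1) i] }
  have hST : (⊤ : Subgroup G) ≤ S := by
    rw [← hgen, Subgroup.closure_le]
    rintro w (rfl | rfl)
    · exact ⟨1, 0, by simp⟩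
    · exact ⟨0, 1, by simp⟩
  exact fun w => hST (Subgroup.mem_top w)

lemma L_unique {σ τ : G} {d e : ℕ} (hcop : Nat.Coprime d e)
    (hσ : orderOf σ = e) (hτ : orderOf τ = d)
    {i j i' j' : ℕ} (h : σ^i * τ^j = σ^i' * τ^j') :
    i ≡ i' [MOD e] ∧ j ≡ j' [MOD d] := by
  have hσe : σ ^ e = 1 := by rw [← hσ]; exact pow_orderOf_eq_one σ
  have hτd : τ ^ d = 1 := by rw [← hτ]; exact pow_orderOf_eq_one τ
  have key : σ ^ ((i:ℤ) - (i':ℤ)) = τ ^ ((j':ℤ) - (j:ℤ)) := by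
    have e1 : (i:ℤ) - i' = -(i':ℤ) + i := by ring
    rw [e1, zpow_add, zpow_neg, zpow_sub, zpow_natCast, zpow_natCast, zpow_natCast,
      zpow_natCast, inv_mul_eq_iff_eq_mul, ← mul_assoc, ← h, mul_assoc,
      mul_inv_cancel, mul_one]
  set y : G := σ ^ ((i:ℤ) - (i':ℤ)) with hy
  have hye : y ^ e = 1 := by
    rw [hy, ← zpow_natCast, ← zpow_mul, mul_comm, zpow_mul, zpow_natCast, hσe, one_zpow]
  have hyd : y ^ d = 1 := by
    rw [key, ← zpow_natCast, ← zpow_mul, mul_comm, zpow_mul, zpow_natCast, hτd,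
      one_zpow]
  have h1 : orderOf y ∣ e := orderOf_dvd_of_pow_eq_one hye
  have h2 : orderOf y ∣ d := orderOf_dvd_of_pow_eq_one hyd
  have h3 : orderOf y ∣ 1 := by
    rw [← Nat.coprime_iff_gcd_eq_one.mp hcop]; exact Nat.dvd_gcd h2 h1
  have hy1 : y = 1 := orderOf_eq_one_iff.mp (Nat.dvd_one.mp h3)
  constructor
  · have hdvd : ((e:ℤ)) ∣ (i:ℤ) - i' := by
      have hy1' : σ ^ ((i:ℤ)-(i':ℤ)) = 1 := by rw [← hy]; exact hy1
      have := orderOf_dvd_iff_zpow_eq_one.mpr hy1'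
      rwa [hσ] at this
    rw [Nat.modEq_iff_dvd]
    exact (dvd_sub_comm).mp hdvd
  · have hdvd : ((d:ℤ)) ∣ (j':ℤ) - j := by
      have h0 : τ ^ ((j':ℤ) - (j:ℤ)) = 1 := by rw [← key]; exact hy1
      have := orderOf_dvd_iff_zpow_eq_one.mpr h0
      rwa [hτ] at this
    rw [Nat.modEq_iff_dvd]
    exact hdvd

end RegAux
/-- The holomorph `Hol(G) = G ⋊ Aut(G)`. -/
abbrev Hol (G : Type*) [Group G] : Type _ :=
  SemidirectProduct G (MulAut G) (MonoidHom.id (MulAut G))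

/-- A subgroup `C ≤ Hol(G)` is regular for the action `[α,ψ]·β = α·ψ(β)` of
`Hol(G)` on `G`: transitive with trivial point stabilisers. -/
def IsRegularHolSubgroup (G : Type*) [Group G] (C : Subgroup (Hol G)) : Prop :=
  (∀ x y : G, ∃ h ∈ C, h.left * h.right x = y) ∧
    ∀ h ∈ C, ∀ x : G, h.left * h.right x = x → h = 1

/-- **Lemma (regularity criterion).** Let `G = G(d,e,k)` of squarefree order `n = d·e`,
with `z = gcd(e,k-1)`, `g = e/z`, and let `x = [σ^a τ, θ^c φ_u] ∈ Hol(G)` (where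
`s = u.val` is the representative of `u ∈ U(e)`). Then `x` generates a regular cyclic
subgroup of `Hol(G)` iff:
(i) for each prime `q ∣ z`, `s ≡ 1 (mod q)` and `q ∤ a`; and
(ii) for each prime `q ∣ g`, either `s ≡ 1 (mod q)` and `c ≢ 0 (mod q)`, or
`s·k ≡ 1 (mod q)` and `(s-1)a + cz ≢ 0 (mod q)`. -/
theorem regular_generator_criterion (d e k : ℕ) (hd : 0 < d) (he : 0 < e) (hk : 0 < k)
    (hcop : Nat.Coprime d e) (hord : orderOf (k : ZMod e) = d)
    (hsf : Squarefree (d * e))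
    (G : Type) [Group G] (σ τ : G)
    (hσ : orderOf σ = e) (hτ : orderOf τ = d)
    (hrel : τ * σ * τ⁻¹ = σ ^ k) (hgen : Subgroup.closure {σ, τ} = ⊤)
    (z g : ℕ) (hz : z = Nat.gcd e (k - 1)) (hg : g = e / z)
    (θ : MulAut G) (hθσ : θ σ = σ) (hθτ : θ τ = σ ^ z * τ)
    (Φ : (ZMod e)ˣ → MulAut G)
    (hΦ : ∀ u : (ZMod e)ˣ, Φ u σ = σ ^ ((u : ZMod e)).val ∧ Φ u τ = τ)
    (a c : ℕ) (u : (ZMod e)ˣ) (s : ℕ) (hs : s = ((u : ZMod e)).val)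
    (x : Hol G) (hx : x = ⟨σ ^ a * τ, θ ^ c * Φ u⟩) :
    IsRegularHolSubgroup G (Subgroup.zpowers x) ↔
      ((∀ q : ℕ, q.Prime → q ∣ z → (s : ZMod q) = 1 ∧ ¬ (q ∣ a)) ∧
       (∀ q : ℕ, q.Prime → q ∣ g →
          ((s : ZMod q) = 1 ∧ (c : ZMod q) ≠ 0) ∨
          ((s : ZMod q) * (k : ZMod q) = 1 ∧
            ((s : ZMod q) - 1) * (a : ZMod q) + (c : ZMod q) * (z : ZMod q) ≠ 0))) := by
  haveI : NeZero e := ⟨he.ne'⟩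
  haveI : NeZero d := ⟨hd.ne'⟩
  have hσe : σ ^ e = 1 := by rw [← hσ]; exact pow_orderOf_eq_one σ
  have hτd : τ ^ d = 1 := by rw [← hτ]; exact pow_orderOf_eq_one τ
  have hcomm := RegAux.L_comm hrel
  -- abbreviations
  set ψ : MulAut G := θ ^ c * Φ u with hψ
  set A : ℕ → ℕ := RegAux.Aq k s a c z with hA
  set S : ℕ → ℕ := RegAux.Sq s with hS
  -- normal form bijection and finiteness
  have hrep := RegAux.L_rep hd he hσ hτ hrel hgen
  have huniq : ∀ {i j i' j' : ℕ}, σ^i * τ^j = σ^i' * τ^j' →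
      i ≡ i' [MOD e] ∧ j ≡ j' [MOD d] := fun h => RegAux.L_unique hcop hσ hτ h
  have hβ : Function.Bijective (fun p : ZMod e × ZMod d => σ ^ p.1.val * τ ^ p.2.val) := by
    constructor
    · rintro ⟨i₁, j₁⟩ ⟨i₂, j₂⟩ h
      obtain ⟨h1, h2⟩ := huniq h
      have e1 : i₁.val = i₂.val :=
        (Nat.mod_eq_of_lt i₁.val_lt) ▸ (Nat.mod_eq_of_lt i₂.val_lt) ▸ h1
      have e2 : j₁.val = j₂.val :=
        (Nat.mod_eq_of_lt j₁.val_lt) ▸ (Nat.mod_eq_of_lt j₂.val_lt) ▸ h2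
      exact Prod.ext (ZMod.val_injective _ e1) (ZMod.val_injective _ e2)
    · intro w
      obtain ⟨i, j, rfl⟩ := hrep w
      refine ⟨((i : ZMod e), (j : ZMod d)), ?_⟩
      simp only [ZMod.val_natCast]
      rw [← hσ, ← hτ, pow_mod_orderOf, pow_mod_orderOf]
  haveI hfinG : Finite G := Finite.of_surjective _ hβ.2
  have hcardG : Nat.card G = e * d := by
    rw [← Nat.card_eq_of_bijective _ hβ, Nat.card_prod, Nat.card_zmod, Nat.card_zmod]
  haveI : Finite (MulAut G) :=
    Finite.of_injective (fun φ => (φ : G → G)) (fun φ₁ φ₂ h => by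
      ext w; exact congrFun h w)
  haveI : Finite (Hol G) :=
    Finite.of_injective (fun h => (h.left, h.right)) (fun h₁ h₂ hh =>
      SemidirectProduct.ext (congrArg Prod.fst hh) (congrArg Prod.snd hh))
  -- σ^i τ^j = 1 characterisation
  have hστ1 : ∀ i j : ℕ, σ^i * τ^j = 1 ↔ (e ∣ i ∧ d ∣ j) := by
    intro i j
    constructor
    · intro h
      have h' : σ^i * τ^j = σ^0 * τ^0 := by simpa using h
      obtain ⟨h1, h2⟩ := huniq h'
      exact ⟨(Nat.modEq_zero_iff_dvd).mp h1, (Nat.modEq_zero_iff_dvd).mp h2⟩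
    · rintro ⟨⟨i', rfl⟩, ⟨j', rfl⟩⟩
      rw [pow_mul, pow_mul, hσe, hτd, one_pow, one_pow, one_mul]
  -- action of powers of ψ
  have hθcσ : ∀ c' : ℕ, (θ ^ c') σ = σ := by
    intro c'; induction c' with
    | zero => simp
    | succ c' ih => rw [pow_succ, MulAut.mul_apply, hθσ, ih]
  have hθcτ : ∀ c' : ℕ, (θ ^ c') τ = σ ^ (c' * z) * τ := by
    intro c'; induction c' with
    | zero => simp
    | succ c' ih =>
        rw [pow_succ', MulAut.mul_apply, ih, map_mul, map_pow, hθσ, hθτ, ← mul_assoc,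
          ← pow_add]
        have : c' * z + z = (c'+1) * z := by ring
        rw [this]
  have hψσ1 : ψ σ = σ ^ s := by
    rw [hψ, MulAut.mul_apply, (hΦ u).1, ← hs, map_pow, hθcσ]
  have hψτ1 : ψ τ = σ ^ (c * z) * τ := by
    rw [hψ, MulAut.mul_apply, (hΦ u).2, hθcτ]
  have hψσ : ∀ m : ℕ, (ψ ^ m) σ = σ ^ (s ^ m) := by
    intro m; induction m with
    | zero => simp
    | succ m ih =>
        rw [pow_succ', MulAut.mul_apply, ih, map_pow, hψσ1, ← pow_mul]
        have : s * s ^ m = s ^ (m+1) := by ring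
        rw [this]
  have hψτ : ∀ m : ℕ, (ψ ^ m) τ = σ ^ (c * z * S m) * τ := by
    intro m; induction m with
    | zero => simp [hS, RegAux.Sq]
    | succ m ih =>
        rw [pow_succ, MulAut.mul_apply, hψτ1, map_mul, map_pow, ih, hψσ, ← pow_mul,
          ← mul_assoc, ← pow_add, hS, RegAux.Sq_succ]
        have : s ^ m * (c * z) + c * z * RegAux.Sq s m
            = c * z * (RegAux.Sq s m + s ^ m) := by ring
        rw [this]
  -- the power formula
  have hxm : ∀ m : ℕ, x ^ m = ⟨σ ^ (A m) * τ^m, ψ ^ m⟩ := by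
    intro m; induction m with
    | zero =>
        apply SemidirectProduct.ext <;>
          simp [hA, RegAux.Aq]
    | succ m ih =>
        rw [pow_succ, ih, hx]
        apply SemidirectProduct.ext
        · show (σ ^ A m * τ ^ m) * (ψ^m) (σ ^ a * τ) = σ ^ A (m+1) * τ ^ (m+1)
          rw [map_mul, map_pow, hψσ, hψτ, ← pow_mul, ← mul_assoc (σ ^ (s^m*a)), ← pow_add]
          rw [show σ ^ A m * τ ^ m * (σ ^ (s ^ m * a + c * z * S m) * τ)
              = σ ^ A m * (τ ^ m * σ ^ (s ^ m * a + c * z * S m)) * τ by group]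
          rw [hcomm m, ← mul_assoc, ← pow_add, mul_assoc, ← pow_succ]
          have : A m + (s ^ m * a + c * z * S m) * k ^ m = A (m+1) := by
            rw [hA, RegAux.Aq_succ]; ring
          rw [this]
        · show (ψ^m) * ψ = ψ^(m+1)
          rw [pow_succ]
  have hxleft : ∀ m : ℕ, (x ^ m).left = σ ^ (A m) * τ^m := by
    intro m; rw [hxm m]
  -- characterisation of (x^m).left = 1
  have hleft1 : ∀ m : ℕ, (x ^ m).left = 1 ↔ ((A m : ZMod e) = 0 ∧ d ∣ m) := by
    intro m
    rw [hxleft, hστ1, ZMod.natCast_eq_zero_iff]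
  -- characterisation of x^m = 1
  have haut1 : ∀ φ : MulAut G, φ σ = σ → φ τ = τ → φ = 1 := by
    intro φ hφσ hφτ
    have : ∀ w : G, φ w = w := by
      intro w
      obtain ⟨i, j, rfl⟩ := hrep w
      rw [map_mul, map_pow, map_pow, hφσ, hφτ]
    exact MulEquiv.ext fun w => this w
  have hcast1 : ∀ N : ℕ, ((N : ZMod e) = 1) ↔ (N ≡ 1 [MOD e]) := by
    intro N
    rw [show (1 : ZMod e) = ((1:ℕ) : ZMod e) by push_cast; ring, ZMod.natCast_eq_natCast_iff]
  have hxone : ∀ m : ℕ, x ^ m = 1 ↔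
      ((A m : ZMod e) = 0 ∧ d ∣ m ∧ (s : ZMod e)^m = 1 ∧ ((c*z*S m : ℕ) : ZMod e) = 0) := by
    intro m
    have hrightm : (x ^ m).right = ψ ^ m := by rw [hxm m]
    have hsm : (s : ZMod e)^m = ((s^m : ℕ) : ZMod e) := by push_cast; ring
    constructor
    · intro h
      have hl : (x ^ m).left = 1 := by rw [h]; rfl
      have hr : ψ ^ m = 1 := by rw [← hrightm, h]; rfl
      obtain ⟨h1, h2⟩ := (hleft1 m).mp hl
      refine ⟨h1, h2, ?_, ?_⟩
      · have hσs : σ ^ (s ^ m) = σ ^ 1 := by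
          rw [← hψσ m, hr, MulAut.one_apply, pow_one]
        have := (pow_eq_pow_iff_modEq.mp hσs)
        rw [hσ] at this
        rw [hsm, hcast1]
        exact this
      · have hτs : σ ^ (c*z*S m) * τ = τ := by rw [← hψτ m, hr, MulAut.one_apply]
        rw [mul_eq_right, ← orderOf_dvd_iff_pow_eq_one, hσ] at hτs
        rw [ZMod.natCast_eq_zero_iff]
        exact hτs
    · rintro ⟨h1, h2, h3, h4⟩
      rw [ZMod.natCast_eq_zero_iff] at h1 h4
      rw [hsm, hcast1] at h3
      rw [hxm m]
      apply SemidirectProduct.ext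
      · show σ ^ A m * τ ^ m = 1
        exact (hστ1 _ _).mpr ⟨h1, h2⟩
      · show ψ ^ m = 1
        apply haut1
        · rw [hψσ m]
          have h5 : σ ^ (s ^ m) = σ ^ 1 := pow_eq_pow_iff_modEq.mpr (by rw [hσ]; exact h3)
          simpa using h5
        · rw [hψτ m, mul_eq_right, ← orderOf_dvd_iff_pow_eq_one, hσ]
          exact h4
  -- prime-level facts
  have hedvd : e ∣ d * e := ⟨d, Nat.mul_comm d e⟩
  have hsfe : Squarefree e := Squarefree.squarefree_of_dvd hedvd hsf
  have hzdvd : z ∣ e := hz ▸ Nat.gcd_dvd_left e (k-1)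
  have hzk : z ∣ k - 1 := hz ▸ Nat.gcd_dvd_right e (k-1)
  have hzpos : 0 < z := hz ▸ Nat.gcd_pos_of_pos_left _ he
  have hezg : e = z * g := by rw [hg, Nat.mul_div_cancel' hzdvd]
  have hgdvd : g ∣ e := ⟨z, by rw [hezg, Nat.mul_comm]⟩
  have hke : (k : ZMod e)^d = 1 := by rw [← hord]; exact pow_orderOf_eq_one _
  have hse : (s : ZMod e) = (u : ZMod e) := by rw [hs]; exact ZMod.natCast_rightInverse _
  have hsplit : ∀ q : ℕ, q.Prime → q ∣ e → q ∣ z ∨ q ∣ g := by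
    intro q hq hqe; exact (Nat.Prime.dvd_mul hq).mp (hezg ▸ hqe)
  have hnotboth : ∀ q : ℕ, q.Prime → q ∣ z → q ∣ g → False := by
    intro q hq h1 h2
    have h3 : q * q ∣ e := hezg ▸ mul_dvd_mul h1 h2
    have h4 : q * q ∣ d * e := h3.trans hedvd
    exact hq.ne_one (Nat.isUnit_iff.mp (hsf q h4))
  have hkq : ∀ q : ℕ, q.Prime → q ∣ e → (k : ZMod q)^d = 1 := by
    intro q hq hqe
    have h := congrArg (ZMod.castHom hqe (ZMod q)) hke
    rwa [map_pow, map_natCast, map_one] at h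
  have hsq0 : ∀ q : ℕ, q.Prime → q ∣ e → (s : ZMod q) ≠ 0 := by
    intro q hq hqe
    haveI := Fact.mk hq
    have hu : IsUnit (s : ZMod e) := hse ▸ u.isUnit
    have h2 : IsUnit (s : ZMod q) := by
      have h3 := hu.map (ZMod.castHom hqe (ZMod q))
      rwa [map_natCast] at h3
    exact h2.ne_zero
  have hkz1 : ∀ q : ℕ, q.Prime → q ∣ z → ((k : ZMod q) = 1 ∧ (z : ZMod q) = 0) := by
    intro q hq hqz
    constructor
    · obtain ⟨t, ht⟩ := hqz.trans hzk
      have hk1 : k = q * t + 1 := by omega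
      rw [hk1]; push_cast; simp [ZMod.natCast_self]
    · rw [ZMod.natCast_eq_zero_iff]; exact hqz
  have hkg1 : ∀ q : ℕ, q.Prime → q ∣ g → ((k : ZMod q) ≠ 1 ∧ (z : ZMod q) ≠ 0) := by
    intro q hq hqg
    have hqe : q ∣ e := hqg.trans hgdvd
    constructor
    · intro hk1
      have h5 : (((k-1:ℕ)) : ZMod q) = 0 := by
        have hk' : ((k:ℕ) : ZMod q) - 1 = 0 := by rw [hk1]; ring
        have h6 : (((k-1:ℕ)) : ZMod q) = ((k:ℕ) : ZMod q) - 1 := by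
          push_cast [Nat.cast_sub hk]
          ring
        rw [h6, hk']
      rw [ZMod.natCast_eq_zero_iff] at h5
      have hqz : q ∣ z := hz ▸ Nat.dvd_gcd hqe h5
      exact hnotboth q hq hqz hqg
    · intro hz0
      rw [ZMod.natCast_eq_zero_iff] at hz0
      exact hnotboth q hq hz0 hqg
  constructor
  · -- necessity: regular → congruence conditions
    rintro ⟨htrans, hfree⟩
    have hsurj : ∀ y : G, ∃ m : ℕ, (x ^ m).left = y := by
      intro y
      obtain ⟨h, hmem, hact⟩ := htrans 1 y
      obtain ⟨t, rfl⟩ := Subgroup.mem_zpowers_iff.mp hmem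
      refine ⟨(t % (orderOf x : ℤ)).toNat, ?_⟩
      have hpos : (0:ℤ) < (orderOf x : ℤ) := by exact_mod_cast orderOf_pos x
      have hxn : x ^ ((t % (orderOf x:ℤ)).toNat) = x ^ t := by
        rw [← zpow_natCast, Int.toNat_of_nonneg (Int.emod_nonneg t hpos.ne')]
        exact zpow_mod_orderOf x t
      rw [hxn]
      rwa [map_one, mul_one] at hact
    have hAsurj : ∀ q : ℕ, q.Prime → q ∣ e → ∀ v : ZMod q,
        ∃ m : ℕ, d ∣ m ∧ (A m : ZMod q) = v := by
      intro q hq hqe v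
      haveI := Fact.mk hq
      obtain ⟨m, hm⟩ := hsurj (σ ^ (v.val))
      rw [hxleft] at hm
      have hm' : σ ^ A m * τ ^ m = σ ^ v.val * τ ^ 0 := by
        rw [pow_zero, mul_one]; exact hm
      obtain ⟨h1, h2⟩ := huniq hm'
      refine ⟨m, (Nat.modEq_zero_iff_dvd).mp h2, ?_⟩
      have h3 : (A m : ZMod e) = (v.val : ZMod e) :=
        (ZMod.natCast_eq_natCast_iff _ _ _).mpr h1
      have h4 := congrArg (ZMod.castHom hqe (ZMod q)) h3
      rw [map_natCast, map_natCast] at h4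
      rw [h4]
      exact ZMod.natCast_rightInverse v
    constructor
    · -- condition (i): q ∣ z
      intro q hq hqz
      haveI := Fact.mk hq
      have hqe := hqz.trans hzdvd
      obtain ⟨hk1, hz0⟩ := hkz1 q hq hqz
      have hG7 : ∀ m : ℕ, (A m : ZMod q) = (a : ZMod q) * (S m : ZMod q) := by
        intro m; rw [hA, hS]; exact RegAux.G7 k s a c z m hz0 hk1
      have ha0 : (a : ZMod q) ≠ 0 := by
        intro h0
        obtain ⟨m, _, hm⟩ := hAsurj q hq hqe 1
        rw [hG7, h0, zero_mul] at hm
        exact one_ne_zero hm.symm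
      have hs1 : (s : ZMod q) = 1 := by
        by_contra hs1
        obtain ⟨m, _, hm⟩ := hAsurj q hq hqe (-(a:ZMod q) * ((s:ZMod q) - 1)⁻¹)
        rw [hG7] at hm
        have hsub : ((s:ZMod q) - 1) ≠ 0 := sub_ne_zero.mpr hs1
        have h8 := congrArg (fun w => ((s:ZMod q) - 1) * w) hm
        rw [show ((s:ZMod q)-1) * ((a:ZMod q) * (S m : ZMod q))
            = (a:ZMod q) * (((s:ZMod q)-1) * ((RegAux.Sq s) m : ZMod q)) from by
              rw [hS]; ring,
          RegAux.G1] at h8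
        rw [show ((s:ZMod q)-1) * (-(a:ZMod q) * ((s:ZMod q)-1)⁻¹)
            = -(a:ZMod q) * (((s:ZMod q)-1) * ((s:ZMod q)-1)⁻¹) from by ring,
          mul_inv_cancel₀ hsub, mul_one] at h8
        have h9 : (a:ZMod q) * (s:ZMod q)^m = 0 := by linear_combination h8
        exact (mul_ne_zero ha0 (pow_ne_zero m (hsq0 q hq hqe))) h9
      exact ⟨hs1, fun hdvd => ha0 (by rw [ZMod.natCast_eq_zero_iff]; exact hdvd)⟩
    · -- condition (ii): q ∣ g
      intro q hq hqg
      haveI := Fact.mk hq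
      have hqe := hqg.trans hgdvd
      obtain ⟨hk1, hz0⟩ := hkg1 q hq hqg
      have hkd := hkq q hq hqe
      have hk1' : (k:ZMod q) - 1 ≠ 0 := sub_ne_zero.mpr hk1
      by_cases hs1 : (s : ZMod q) = 1
      · left
        refine ⟨hs1, ?_⟩
        intro hc0
        obtain ⟨m, hdm, hm⟩ := hAsurj q hq hqe 1
        have hL := RegAux.Lg1 (F := ZMod q) a c z hkd hk1 hdm hs1
        rw [← hA] at hL
        rw [hc0, zero_mul, zero_mul] at hL
        have h0 : (A m : ZMod q) = 0 := (mul_eq_zero.mp hL).resolve_left hk1'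
        rw [hm] at h0; exact one_ne_zero h0
      · right
        have hssub : (s:ZMod q) - 1 ≠ 0 := sub_ne_zero.mpr hs1
        have hks : (s:ZMod q) * (k:ZMod q) = 1 := by
          by_contra hks
          have hks' : (k:ZMod q) * (s:ZMod q) - 1 ≠ 0 :=
            sub_ne_zero.mpr (by rwa [mul_comm] at hks)
          have hprod : ((s:ZMod q)-1) * ((k:ZMod q)*(s:ZMod q)-1) ≠ 0 :=
            mul_ne_zero hssub hks'
          by_cases hb : ((s:ZMod q)-1) * (a:ZMod q) + (c:ZMod q)*(z:ZMod q) = 0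
          · obtain ⟨m, hdm, hm⟩ := hAsurj q hq hqe 1
            have hL := RegAux.Lg3 (F := ZMod q) (s := s) a c z hkd hk1 hdm
            rw [← hA] at hL
            rw [hb, zero_mul] at hL
            have h0 : (A m : ZMod q) = 0 := (mul_eq_zero.mp hL).resolve_left hprod
            rw [hm] at h0; exact one_ne_zero h0
          · set β : ZMod q := ((s:ZMod q)-1) * (a:ZMod q) + (c:ZMod q)*(z:ZMod q) with hβ
            obtain ⟨m, hdm, hm⟩ := hAsurj q hq hqe
              (-β * (((s:ZMod q)-1) * ((k:ZMod q)*(s:ZMod q)-1))⁻¹)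
            have hL := RegAux.Lg3 (F := ZMod q) (s := s) a c z hkd hk1 hdm
            rw [← hA] at hL
            rw [hm] at hL
            have hinv : (((s:ZMod q)-1) * ((k:ZMod q)*(s:ZMod q)-1))
                * (((s:ZMod q)-1) * ((k:ZMod q)*(s:ZMod q)-1))⁻¹ = 1 :=
              mul_inv_cancel₀ hprod
            have h9 : β * (s:ZMod q)^m = 0 := by
              linear_combination (-1 : ZMod q) * hL - β * hinv
            exact (mul_ne_zero hb (pow_ne_zero m (hsq0 q hq hqe))) h9
        refine ⟨hks, ?_⟩
        intro hb0
        obtain ⟨m, hdm, hm⟩ := hAsurj q hq hqe 1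
        have hL := RegAux.Lg2 (F := ZMod q) a c z hkd hk1 hdm hks
        rw [← hA] at hL
        rw [hb0, zero_mul] at hL
        have h0 : (A m : ZMod q) = 0 := (mul_eq_zero.mp hL).resolve_left hssub
        rw [hm] at h0; exact one_ne_zero h0
  · -- sufficiency
    rintro ⟨hcondz, hcondg⟩
    -- local dichotomy: for prime q ∣ e and d ∣ m : Ā m = 0 ↔ m̄ = 0
    have hloc : ∀ q : ℕ, q.Prime → q ∣ e → ∀ m : ℕ, d ∣ m →
        ((A m : ZMod q) = 0 ↔ (m : ZMod q) = 0) := by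
      intro q hq hqe m hdm
      haveI := Fact.mk hq
      rcases hsplit q hq hqe with hqz | hqg
      · obtain ⟨hk1, hz0⟩ := hkz1 q hq hqz
        obtain ⟨hs1, hqa⟩ := hcondz q hq hqz
        have ha0 : (a : ZMod q) ≠ 0 := fun h =>
          hqa ((ZMod.natCast_eq_zero_iff _ _).mp h)
        have hG7 : (A m : ZMod q) = (a:ZMod q) * (S m : ZMod q) := by
          rw [hA, hS]; exact RegAux.G7 k s a c z m hz0 hk1
        have hSm : ((S m : ℕ) : ZMod q) = (m : ZMod q) := by
          rw [hS]; exact RegAux.G2 s m hs1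
        rw [hG7, hSm, mul_eq_zero]
        constructor
        · intro h; exact h.resolve_left ha0
        · intro h; exact Or.inr h
      · obtain ⟨hk1, hz0⟩ := hkg1 q hq hqg
        have hkd := hkq q hq hqe
        have hk1' : (k:ZMod q) - 1 ≠ 0 := sub_ne_zero.mpr hk1
        rcases hcondg q hq hqg with ⟨hs1, hc0⟩ | ⟨hks, hb0⟩
        · have hL := RegAux.Lg1 (F := ZMod q) a c z hkd hk1 hdm hs1
          rw [← hA] at hL
          constructor
          · intro h0; rw [h0, mul_zero] at hL
            rcases mul_eq_zero.mp hL.symm with h | h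
            · rcases mul_eq_zero.mp h with h' | h'
              · exact absurd h' hc0
              · exact absurd h' hz0
            · exact h
          · intro h0; rw [h0, mul_zero] at hL
            exact (mul_eq_zero.mp hL).resolve_left hk1'
        · have hs1 : (s:ZMod q) ≠ 1 := by
            intro h; rw [h, one_mul] at hks; exact hk1 hks
          have hssub : (s:ZMod q) - 1 ≠ 0 := sub_ne_zero.mpr hs1
          have hL := RegAux.Lg2 (F := ZMod q) a c z hkd hk1 hdm hks
          rw [← hA] at hL
          constructor
          · intro h0; rw [h0, mul_zero] at hL
            exact (mul_eq_zero.mp hL.symm).resolve_left hb0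
          · intro h0; rw [h0, mul_zero] at hL
            exact (mul_eq_zero.mp hL).resolve_left hssub
    -- C2
    have hC2 : ∀ m : ℕ, d ∣ m → (A m : ZMod e) = 0 → (d * e) ∣ m := by
      intro m hdm hAm
      have hedvdm : e ∣ m := by
        apply RegAux.sq_dvd_nat hsfe
        intro q hq hqe
        haveI := Fact.mk hq
        have h1 : (A m : ZMod q) = 0 := by
          have h2 := congrArg (ZMod.castHom hqe (ZMod q)) hAm
          rwa [map_natCast, map_zero] at h2
        have h2 : (m : ZMod q) = 0 := (hloc q hq hqe m hdm).mp h1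
        exact (ZMod.natCast_eq_zero_iff _ _).mp h2
      exact hcop.mul_dvd_of_dvd_of_dvd hdm hedvdm
    -- s^(de) = 1 modulo each prime
    have hsde : ∀ q : ℕ, q.Prime → q ∣ e → (s : ZMod q)^(d*e) = 1 := by
      intro q hq hqe
      haveI := Fact.mk hq
      rcases hsplit q hq hqe with hqz | hqg
      · rw [(hcondz q hq hqz).1, one_pow]
      · rcases hcondg q hq hqg with ⟨hs1, _⟩ | ⟨hks, _⟩
        · rw [hs1, one_pow]
        · have hkde : (k:ZMod q)^(d*e) = 1 := RegAux.kpow_one (hkq q hq hqe) ⟨e, rfl⟩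
          have h2 : (s:ZMod q)^(d*e) * (k:ZMod q)^(d*e) = 1 := by
            rw [← mul_pow, hks, one_pow]
          rwa [hkde, mul_one] at h2
    -- C1
    have hC1 : x ^ (d*e) = 1 := by
      rw [hxone]
      refine ⟨?_, ⟨e, rfl⟩, ?_, ?_⟩
      · rw [ZMod.natCast_eq_zero_iff]
        apply RegAux.sq_dvd_nat hsfe
        intro q hq hqe
        haveI := Fact.mk hq
        rw [← ZMod.natCast_eq_zero_iff]
        apply (hloc q hq hqe (d*e) ⟨e, rfl⟩).mpr
        rw [ZMod.natCast_eq_zero_iff]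
        exact Dvd.dvd.mul_left hqe d
      · have h2 : ((s^(d*e) : ℕ) : ZMod e) = ((1:ℕ) : ZMod e) := by
          rw [ZMod.natCast_eq_natCast_iff, Nat.modEq_iff_dvd]
          apply RegAux.sq_dvd_int hsfe
          intro q hq hqe
          haveI := Fact.mk hq
          rw [← ZMod.intCast_zmod_eq_zero_iff_dvd]
          push_cast
          rw [hsde q hq hqe]
          ring
        push_cast at h2
        exact h2
      · rw [ZMod.natCast_eq_zero_iff]
        apply RegAux.sq_dvd_nat hsfe
        intro q hq hqe
        haveI := Fact.mk hq
        rw [← ZMod.natCast_eq_zero_iff]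
        push_cast
        rcases hsplit q hq hqe with hqz | hqg
        · rw [(hkz1 q hq hqz).2]; ring
        · have hSde : ((RegAux.Sq s (d*e) : ℕ) : ZMod q) = 0 := by
            rcases hcondg q hq hqg with ⟨hs1, _⟩ | ⟨hks, _⟩
            · rw [RegAux.G2 s (d*e) hs1, ZMod.natCast_eq_zero_iff]
              exact Dvd.dvd.mul_left hqe d
            · have hs1 : (s:ZMod q) ≠ 1 := by
                intro h; rw [h, one_mul] at hks; exact (hkg1 q hq hqg).1 hks
              have h3 := RegAux.G1 (R := ZMod q) s (d*e)
              rw [hsde q hq hqe, sub_self] at h3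
              exact (mul_eq_zero.mp h3).resolve_left (sub_ne_zero.mpr hs1)
          rw [hS, hSde, mul_zero]
    have hxde : ∀ n : ℕ, (d*e) ∣ n → x^n = 1 := by
      rintro n ⟨t, rfl⟩; rw [pow_mul, hC1, one_pow]
    haveI : NeZero (d*e) := ⟨(Nat.mul_pos hd he).ne'⟩
    have hstep : ∀ m r : ℕ, (x ^ (m + r)).left = (x ^ m).left → (x ^ r).left = 1 := by
      intro m r h
      rw [pow_add] at h
      simp only [SemidirectProduct.mul_left, MonoidHom.id_apply] at h
      have h2 : ((x^m).right) ((x^r).left) = 1 := (mul_eq_left).mp h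
      exact (EmbeddingLike.map_eq_one_iff).mp h2
    have hFinj : Function.Injective (fun t : ZMod (d*e) => (x ^ t.val).left) := by
      have main : ∀ t₁ t₂ : ZMod (d*e), t₁.val ≤ t₂.val →
          (x ^ t₁.val).left = (x ^ t₂.val).left → t₁ = t₂ := by
        intro t₁ t₂ hle h12
        obtain ⟨r, hr⟩ := Nat.le.dest hle
        have h1 : (x ^ (t₁.val + r)).left = (x ^ t₁.val).left := by rw [hr]; exact h12.symm
        have h2 := hstep _ _ h1
        have h3 := (hleft1 r).mp h2
        have h4 : (d*e) ∣ r := hC2 r h3.2 h3.1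
        have h5 : r < d*e := by have := t₂.val_lt; omega
        have h6 : r = 0 := Nat.eq_zero_of_dvd_of_lt h4 h5
        exact ZMod.val_injective _ (by omega)
      intro t₁ t₂ h12
      simp only at h12
      rcases le_total t₁.val t₂.val with hle | hle
      · exact main t₁ t₂ hle h12
      · exact (main t₂ t₁ hle h12.symm).symm
    have hFbij : Function.Bijective (fun t : ZMod (d*e) => (x ^ t.val).left) := by
      rw [Nat.bijective_iff_injective_and_card]
      refine ⟨hFinj, ?_⟩
      rw [Nat.card_zmod, hcardG]; ring
    have hsurjf : ∀ y : G, ∃ m : ℕ, (x ^ m).left = y := by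
      intro y; obtain ⟨t, ht⟩ := hFbij.2 y; exact ⟨t.val, ht⟩
    have hact : ∀ (g₁ g₂ : Hol G) (β : G),
        (g₁ * g₂).left * (g₁ * g₂).right β
          = g₁.left * g₁.right (g₂.left * g₂.right β) := by
      intro g₁ g₂ β
      simp only [SemidirectProduct.mul_left, SemidirectProduct.mul_right,
        MonoidHom.id_apply, MulAut.mul_apply, map_mul, mul_assoc]
    constructor
    · intro w y
      obtain ⟨m', hm'⟩ := hsurjf w
      obtain ⟨m, hm⟩ := hsurjf y
      refine ⟨x ^ ((m:ℤ) - (m':ℤ)), ⟨(m:ℤ) - (m':ℤ), rfl⟩, ?_⟩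
      have hmul : x ^ ((m:ℤ) - (m':ℤ)) * x ^ m' = x ^ m := by
        rw [← zpow_natCast x m', ← zpow_add, sub_add_cancel, zpow_natCast]
      have h1 : w = (x ^ m').left * (x ^ m').right 1 := by rw [map_one, mul_one, hm']
      calc (x ^ ((m:ℤ) - (m':ℤ))).left * (x ^ ((m:ℤ) - (m':ℤ))).right w
          = (x ^ ((m:ℤ) - (m':ℤ))).left * (x ^ ((m:ℤ) - (m':ℤ))).right
              ((x ^ m').left * (x ^ m').right 1) := by rw [← h1]
        _ = (x ^ ((m:ℤ) - (m':ℤ)) * x ^ m').left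
              * (x ^ ((m:ℤ) - (m':ℤ)) * x ^ m').right 1 := (hact _ _ _).symm
        _ = (x ^ m).left * (x ^ m).right 1 := by rw [hmul]
        _ = y := by rw [map_one, mul_one, hm]
    · intro h hmem w hfix
      obtain ⟨t, rfl⟩ := Subgroup.mem_zpowers_iff.mp hmem
      have hpos : (0:ℤ) < (orderOf x : ℤ) := by exact_mod_cast orderOf_pos x
      set n : ℕ := (t % (orderOf x:ℤ)).toNat with hn
      have hxn : x ^ t = x ^ n := by
        rw [hn, ← zpow_natCast, Int.toNat_of_nonneg (Int.emod_nonneg t hpos.ne')]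
        exact (zpow_mod_orderOf x t).symm
      obtain ⟨m', hm'⟩ := hsurjf w
      have hfix' : (x ^ n).left * (x ^ n).right w = w := by rw [← hxn]; exact hfix
      have h2 : (x ^ m').left * (x ^ m').right 1 = w := by rw [map_one, mul_one, hm']
      have hw : (x ^ (n + m')).left = w := by
        have e1 : (x ^ (n + m')).left = (x ^ (n + m')).left * (x ^ (n + m')).right 1 := by
          rw [map_one, mul_one]
        rw [e1, pow_add, hact, h2, hfix']
      have h1 : (x ^ (m' + n)).left = (x ^ m').left := by
        rw [Nat.add_comm m' n, hw, hm']
      have h3 := (hleft1 n).mp (hstep _ _ h1)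
      have h4 : (d*e) ∣ n := hC2 n h3.2 h3.1
      rw [hxn]
      exact hxde n h4
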